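/- Let G be a finite simple connected graph that is 2-connected and chordal. Then every pair of adjacent vertices of G forms a hull set of G; that is, for every edge uv of G, the Δ-convex hull of {u, v} equals the whole vertex set V(G). -/

import Mathlib

variable {V : Type*}

/-- A set `S` is Δ-convex in `G` if every vertex adjacent to two adjacent vertices of `S`
belongs to `S`. -/
def DeltaConvex (G : SimpleGraph V) (S : Set V) : Prop :=
  ∀ ⦃u v w : V⦄, u ∈ S → v ∈ S → G.Adj u v → G.Adj w u → G.Adj w v → w ∈ S

/-- The Δ-convex hull of `S`: the smallest Δ-convex set containing `S`. -/
def deltaHull (G : SimpleGraph V) (S : Set V) : Set V :=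
  ⋂₀ {T : Set V | S ⊆ T ∧ DeltaConvex G T}

/-- `S` is Helly independent: the intersection of the hulls of the sets `S \ {a}`, `a ∈ S`,
is empty. -/
def HellyIndep (G : SimpleGraph V) (S : Set V) : Prop :=
  (⋂ a ∈ S, deltaHull G (S \ {a})) = ∅

/-- The Helly number of `G` w.r.t. Δ-convexity: the maximum cardinality of a Helly
independent subset of the vertex set. -/
noncomputable def hellyNumber (G : SimpleGraph V) : ℕ :=
  sSup {n : ℕ | ∃ S : Set V, HellyIndep G S ∧ S.ncard = n}

/-- `S` is Radon independent: no partition of `S` into two nonempty disjoint parts has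
intersecting hulls. -/
def RadonIndep (G : SimpleGraph V) (S : Set V) : Prop :=
  ¬ ∃ S₁ S₂ : Set V, S₁ ∪ S₂ = S ∧ Disjoint S₁ S₂ ∧ S₁.Nonempty ∧ S₂.Nonempty ∧
    (deltaHull G S₁ ∩ deltaHull G S₂).Nonempty

/-- The Radon number of `G` w.r.t. Δ-convexity. -/
noncomputable def radonNumber (G : SimpleGraph V) : ℕ :=
  sSup {n : ℕ | ∃ S : Set V, RadonIndep G S ∧ S.ncard = n}

/-- `S` is convexly independent: `a ∉ ⟨S \ {a}⟩` for every `a ∈ S`. -/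
def ConvIndep (G : SimpleGraph V) (S : Set V) : Prop :=
  ∀ a ∈ S, a ∉ deltaHull G (S \ {a})

/-- The rank of `G` w.r.t. Δ-convexity. -/
noncomputable def rankDelta (G : SimpleGraph V) : ℕ :=
  sSup {n : ℕ | ∃ S : Set V, ConvIndep G S ∧ S.ncard = n}

/-- The independence number: maximum cardinality of a set of pairwise non-adjacent
vertices. -/
noncomputable def alphaNum (G : SimpleGraph V) : ℕ :=
  sSup {n : ℕ | ∃ S : Set V, S.Pairwise (fun a b => ¬ G.Adj a b) ∧ S.ncard = n}

/-- `G` is 2-connected: at least 3 vertices, connected, and deleting any single vertex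
leaves a connected graph. -/
def TwoConnected (G : SimpleGraph V) : Prop :=
  3 ≤ Nat.card V ∧ G.Connected ∧ ∀ v : V, (G.induce {u : V | u ≠ v}).Connected

/-- `G` is chordal: every cycle of length at least 4 has a chord, i.e. an edge of `G`
joining two vertices of the cycle that is not an edge of the cycle. -/
def ChordalGraph (G : SimpleGraph V) : Prop :=
  ∀ (v : V) (c : G.Walk v v), c.IsCycle → 4 ≤ c.length →
    ∃ x y : V, x ∈ c.support ∧ y ∈ c.support ∧ G.Adj x y ∧ s(x, y) ∉ c.edges

/-- `B` induces a connected subgraph of `G` with at least two vertices and no cut vertex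
(so: an edge, or a 2-connected subgraph). -/
def NoCutSet (G : SimpleGraph V) (B : Set V) : Prop :=
  2 ≤ B.ncard ∧ (G.induce B).Connected ∧ ∀ v ∈ B, (G.induce (B \ {v})).Connected

/-- `B` is (the vertex set of) a block of `G`: a maximal 2-connected subgraph, where a
bridge together with its endpoints also counts as a block. -/
def IsBlock (G : SimpleGraph V) (B : Set V) : Prop :=
  NoCutSet G B ∧ ∀ B' : Set V, NoCutSet G B' → B ⊆ B' → B = B'

/-- The set `B` induces a complete subgraph of `G`. -/
def CompleteOn (G : SimpleGraph V) (B : Set V) : Prop :=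
  ∀ u ∈ B, ∀ v ∈ B, u ≠ v → G.Adj u v

section Aux
open SimpleGraph Walk
variable {G : SimpleGraph V}

lemma takeUntil_cons_start [DecidableEq V] {s s₂ t : V} (h : G.Adj s s₂) (q : G.Walk s₂ t)
    (hm : s ∈ (Walk.cons h q).support) : (Walk.cons h q).takeUntil s hm = Walk.nil := by
  simp [Walk.takeUntil]

lemma dropUntil_cons_start [DecidableEq V] {s s₂ t : V} (h : G.Adj s s₂) (q : G.Walk s₂ t)
    (hm : s ∈ (Walk.cons h q).support) : (Walk.cons h q).dropUntil s hm = Walk.cons h q := by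
  simp [Walk.dropUntil]

lemma takeUntil_cons_ne [DecidableEq V] {s s₂ t u : V} (h : G.Adj s s₂) (q : G.Walk s₂ t)
    (hm : u ∈ (Walk.cons h q).support) (hne : s ≠ u) (hq : u ∈ q.support) :
    (Walk.cons h q).takeUntil u hm = Walk.cons h (q.takeUntil u hq) := by
  simp [Walk.takeUntil, hne]

lemma dropUntil_cons_ne [DecidableEq V] {s s₂ t u : V} (h : G.Adj s s₂) (q : G.Walk s₂ t)
    (hm : u ∈ (Walk.cons h q).support) (hne : s ≠ u) (hq : u ∈ q.support) :
    (Walk.cons h q).dropUntil u hm = q.dropUntil u hq := by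
  simp [Walk.dropUntil, hne]

lemma length_takeUntil_add_dropUntil [DecidableEq V] {s t u : V} (p : G.Walk s t)
    (h : u ∈ p.support) :
    (p.takeUntil u h).length + (p.dropUntil u h).length = p.length := by
  conv_rhs => rw [← p.take_spec h]
  rw [Walk.length_append]

lemma subset_deltaHull (S : Set V) : S ⊆ deltaHull G S :=
  fun _x hx => Set.mem_sInter.2 fun _T hT => hT.1 hx

lemma deltaConvex_deltaHull (S : Set V) : DeltaConvex G (deltaHull G S) := by
  intro p q w hp hq hpq hwp hwq
  rw [deltaHull, Set.mem_sInter] at *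
  exact fun T hT => hT.2 (hp T hT) (hq T hT) hpq hwp hwq

lemma deltaHull_min {S T : Set V} (h1 : S ⊆ T) (h2 : DeltaConvex G T) : deltaHull G S ⊆ T :=
  fun _x hx => Set.mem_sInter.1 hx T ⟨h1, h2⟩

lemma edge_mem_of_length_one {u v : V} {p : G.Walk u v} (h : p.length = 1) :
    s(u, v) ∈ p.edges := by
  cases p with
  | nil => simp at h
  | cons h' q =>
    cases q with
    | nil => simp
    | cons h'' r => simp [Walk.length_cons] at h

lemma sab_not_mem {a b : V} {p : G.Walk a b} (hp : p.IsPath) (hl : 2 ≤ p.length) :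
    s(a, b) ∉ p.edges := by
  intro he
  cases p with
  | nil => simp at he
  | cons h q =>
    rw [Walk.edges_cons, List.mem_cons] at he
    rcases he with he | he
    · rw [Sym2.eq_iff] at he
      rcases he with ⟨-, rfl⟩ | ⟨rfl, rfl⟩
      · have : q = Walk.nil := (Walk.isPath_iff_eq_nil).1 hp.of_cons
        subst this
        simp at hl
      · exact G.irrefl h
    · exact ((Walk.cons_isPath_iff h q).1 hp).2 (q.fst_mem_support_of_mem_edges he)

lemma ord [DecidableEq V] {s t : V} (p : G.Walk s t) :
    p.IsPath → ∀ x y, x ≠ y → s(x, y) ∉ p.edges →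
    ∀ (hx : x ∈ p.support) (hy : y ∈ p.support),
    (p.takeUntil x hx).length + 1 + (p.dropUntil y hy).length < p.length ∨
    (p.takeUntil y hy).length + 1 + (p.dropUntil x hx).length < p.length := by
  induction p with
  | nil =>
    intro _ x y hxy _ hx hy
    simp only [Walk.support_nil, List.mem_singleton] at hx hy
    exact absurd (hx.trans hy.symm) hxy
  | cons h q ih =>
    intro hp x y hxy he hx hy
    rename_i s s₂ t
    have hq : q.IsPath := hp.of_cons
    have heq : s(x, y) ∉ q.edges := fun hh => he (by rw [Walk.edges_cons]; exact List.mem_cons_of_mem _ hh)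
    by_cases hxs : s = x
    · subst hxs
      have hys : s ≠ y := hxy
      have hyq : y ∈ q.support := by
        rcases List.mem_cons.mp (by simpa [Walk.support_cons] using hy : y ∈ s :: q.support) with h' | h'
        · exact absurd h'.symm hys
        · exact h'
      left
      rw [takeUntil_cons_start, dropUntil_cons_ne h q hy hys hyq]
      have hy2 : s₂ ≠ y := by
        intro hh; subst hh
        exact he (by rw [Walk.edges_cons]; exact List.mem_cons_self)
      have h0 : 1 ≤ (q.takeUntil y hyq).length := by
        rcases Nat.eq_zero_or_pos (q.takeUntil y hyq).length with h0 | h0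
        · exact absurd (Walk.eq_of_length_eq_zero h0) hy2
        · exact h0
      have := length_takeUntil_add_dropUntil q hyq
      simp only [Walk.length_nil, Walk.length_cons]
      omega
    · by_cases hys : s = y
      · subst hys
        have hxq : x ∈ q.support := by
          rcases List.mem_cons.mp (by simpa [Walk.support_cons] using hx : x ∈ s :: q.support) with h' | h'
          · exact absurd h'.symm hxs
          · exact h'
        right
        rw [takeUntil_cons_start, dropUntil_cons_ne h q hx hxs hxq]
        have hx2 : s₂ ≠ x := by
          intro hh; subst hh
          exact he (by rw [Walk.edges_cons, Sym2.eq_swap]; exact List.mem_cons_self)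
        have h0 : 1 ≤ (q.takeUntil x hxq).length := by
          rcases Nat.eq_zero_or_pos (q.takeUntil x hxq).length with h0 | h0
          · exact absurd (Walk.eq_of_length_eq_zero h0) hx2
          · exact h0
        have := length_takeUntil_add_dropUntil q hxq
        simp only [Walk.length_nil, Walk.length_cons]
        omega
      · have hxq : x ∈ q.support := by
          rcases List.mem_cons.mp (by simpa [Walk.support_cons] using hx : x ∈ s :: q.support) with h' | h'
          · exact absurd h'.symm hxs
          · exact h'
        have hyq : y ∈ q.support := by
          rcases List.mem_cons.mp (by simpa [Walk.support_cons] using hy : y ∈ s :: q.support) with h' | h'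
          · exact absurd h'.symm hys
          · exact h'
        rcases ih hq x y hxy heq hxq hyq with hc | hc
        · left
          rw [takeUntil_cons_ne h q hx hxs hxq, dropUntil_cons_ne h q hy hys hyq]
          simp only [Walk.length_cons]
          omega
        · right
          rw [takeUntil_cons_ne h q hy hys hyq, dropUntil_cons_ne h q hx hxs hxq]
          simp only [Walk.length_cons]
          omega

lemma mkP [DecidableEq V] {a b : V} (W : G.Walk a b) (hab : a ≠ b) (hsab : s(a, b) ∉ W.edges) :
    W.bypass.IsPath ∧ 2 ≤ W.bypass.length ∧ W.bypass.length ≤ W.length := by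
  refine ⟨W.bypass_isPath, ?_, W.length_bypass_le⟩
  rcases Nat.lt_or_ge W.bypass.length 2 with hlt | h
  · have h01 : W.bypass.length = 0 ∨ W.bypass.length = 1 := by omega
    rcases h01 with h | h
    · exact absurd (Walk.eq_of_length_eq_zero h) hab
    · exact absurd (W.edges_bypass_subset (edge_mem_of_length_one h)) hsab
  · exact h

lemma penult {s t : V} (W : G.Walk s t) : W.IsPath → s ≠ t →
    ∃ w', G.Adj w' t ∧ w' ∈ W.support ∧ w' ≠ t := by
  induction W with
  | nil => intro _ h; exact absurd rfl h
  | cons h q ih =>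
    intro hp hst
    rename_i s s₂ t
    cases q with
    | nil => exact ⟨s, h, by simp, hst⟩
    | cons h₂ r =>
      have hs₂t : s₂ ≠ t := by
        intro hh; subst hh
        have := (Walk.isPath_iff_eq_nil).1 hp.of_cons
        simp at this
      obtain ⟨w', hw1, hw2, hw3⟩ := ih hp.of_cons hs₂t
      exact ⟨w', hw1, by rw [Walk.support_cons]; exact List.mem_cons_of_mem _ hw2, hw3⟩

lemma first {H : Set V} {t : V} : ∀ {s : V} (W : G.Walk s t), s ∉ H → t ∈ H →
    ∃ (b : V) (W' : G.Walk s b), b ∈ H ∧ (∀ z ∈ W'.support, z ∈ W.support) ∧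
      (∀ z ∈ W'.support, z ≠ b → z ∉ H) := by
  intro s W
  induction W with
  | nil => intro hs ht; exact absurd ht hs
  | cons h q ih =>
    intro hs ht
    rename_i s s₂ t
    by_cases h₂ : s₂ ∈ H
    · refine ⟨s₂, Walk.cons h Walk.nil, h₂, ?_, ?_⟩
      · intro z hz
        simp only [Walk.support_cons, Walk.support_nil, List.mem_cons, List.mem_singleton] at hz
        rw [Walk.support_cons]
        rcases hz with rfl | rfl | h'
        · exact List.mem_cons_self
        · exact List.mem_cons_of_mem _ q.start_mem_support
        · exact absurd h' (by simp)
      · intro z hz hzb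
        simp only [Walk.support_cons, Walk.support_nil, List.mem_cons, List.mem_singleton] at hz
        rcases hz with rfl | rfl | h'
        · exact hs
        · exact absurd rfl hzb
        · exact absurd h' (by simp)
    · obtain ⟨b, W', hb, hsub, hcond⟩ := ih h₂ ht
      refine ⟨b, Walk.cons h W', hb, ?_, ?_⟩
      · intro z hz
        rw [Walk.support_cons] at hz ⊢
        rcases List.mem_cons.mp hz with rfl | hz
        · exact List.mem_cons_self
        · exact List.mem_cons_of_mem _ (hsub z hz)
      · intro z hz hzb
        rcases List.mem_cons.mp (by rwa [Walk.support_cons] at hz) with rfl | hz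
        · exact hs
        · exact hcond z hz hzb

lemma hull_conn {u v : V} (huv : G.Adj u v) :
    ∀ b ∈ deltaHull G {u, v}, ∃ W : G.Walk b u, ∀ z ∈ W.support, z ∈ deltaHull G {u, v} := by
  have hu : u ∈ deltaHull G {u, v} := subset_deltaHull _ (by simp)
  have hv : v ∈ deltaHull G {u, v} := subset_deltaHull _ (by simp)
  have hT : deltaHull G {u, v} ⊆
      {x | x ∈ deltaHull G {u, v} ∧
        ∃ W : G.Walk x u, ∀ z ∈ W.support, z ∈ deltaHull G {u, v}} := by
    apply deltaHull_min
    · intro x hx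
      simp only [Set.mem_insert_iff, Set.mem_singleton_iff] at hx
      rcases hx with rfl | rfl
      · exact ⟨hu, Walk.nil, by simpa using hu⟩
      · refine ⟨hv, Walk.cons huv.symm Walk.nil, ?_⟩
        intro z hz
        simp only [Walk.support_cons, Walk.support_nil, List.mem_cons, List.mem_singleton] at hz
        rcases hz with rfl | rfl | h'
        · exact hv
        · exact hu
        · exact absurd h' (by simp)
    · rintro p q w ⟨hp, Wp, hWp⟩ ⟨hq, _⟩ hpq hwp hwq
      refine ⟨deltaConvex_deltaHull _ hp hq hpq hwp hwq, Walk.cons hwp Wp, ?_⟩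
      intro z hz
      rcases List.mem_cons.mp (by rwa [Walk.support_cons] at hz) with rfl | hz
      · exact deltaConvex_deltaHull _ hp hq hpq hwp hwq
      · exact hWp z hz
  intro b hb
  exact (hT hb).2

lemma conf_cycle {H : Set V} {a b : V} {P : G.Walk a b} {Q : G.Walk b a}
    (hP : P.IsPath) (hQ : Q.IsPath) (hPl : 2 ≤ P.length)
    (hPH : ∀ z ∈ P.support, z ∈ H → z = a ∨ z = b) (hQH : ∀ z ∈ Q.support, z ∈ H) :
    (P.append Q).IsCycle := by
  rw [Walk.isCycle_def]
  have hmem : ∀ z, z ∈ P.support → z ∈ Q.support → z = a ∨ z = b :=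
    fun z hzP hzQ => hPH z hzP (hQH z hzQ)
  refine ⟨?_, ?_, ?_⟩
  · rw [Walk.isTrail_def, Walk.edges_append, List.nodup_append]
    refine ⟨hP.isTrail.edges_nodup, hQ.isTrail.edges_nodup, ?_⟩
    intro e heP e' heQ hee; subst hee
    induction e using Sym2.ind with
    | _ c d =>
      have hcd : G.Adj c d := P.adj_of_mem_edges heP
      have hc := hmem c (P.fst_mem_support_of_mem_edges heP) (Q.fst_mem_support_of_mem_edges heQ)
      have hd := hmem d (P.snd_mem_support_of_mem_edges heP) (Q.snd_mem_support_of_mem_edges heQ)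
      have hab' : s(a, b) ∈ P.edges := by
        rcases hc with rfl | rfl <;> rcases hd with rfl | rfl
        · exact absurd rfl hcd.ne
        · exact heP
        · rwa [Sym2.eq_swap] at heP
        · exact absurd rfl hcd.ne
      exact sab_not_mem hP hPl hab'
  · intro hnil
    have h0 := congrArg Walk.length hnil
    rw [Walk.length_append, Walk.length_nil] at h0
    omega
  · rw [Walk.support_append, Walk.support_eq_cons P, List.cons_append, List.tail_cons]
    have hPn := hP.support_nodup
    have hQn := hQ.support_nodup
    rw [Walk.support_eq_cons P] at hPn
    rw [Walk.support_eq_cons Q] at hQn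
    rw [List.nodup_append]
    refine ⟨(List.nodup_cons.mp hPn).2, (List.nodup_cons.mp hQn).2, ?_⟩
    intro z hz1 z' hz2 hzz; subst hzz
    have hzP : z ∈ P.support := by rw [Walk.support_eq_cons P]; exact List.mem_cons_of_mem _ hz1
    have hzQ : z ∈ Q.support := by rw [Walk.support_eq_cons Q]; exact List.mem_cons_of_mem _ hz2
    rcases hmem z hzP hzQ with rfl | rfl
    · exact (List.nodup_cons.mp hPn).1 hz1
    · exact (List.nodup_cons.mp hQn).1 hz2

def Conf (G : SimpleGraph V) (H : Set V) (n : ℕ) : Prop :=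
  ∃ (a b : V) (P : G.Walk a b) (Q : G.Walk b a), a ∈ H ∧ b ∈ H ∧ a ≠ b ∧
    P.IsPath ∧ Q.IsPath ∧ 2 ≤ P.length ∧
    (∀ z ∈ P.support, z ∈ H → z = a ∨ z = b) ∧ (∀ z ∈ Q.support, z ∈ H) ∧
    P.length + Q.length = n

lemma step_out [DecidableEq V] {H : Set V} {a b x y : V} {P : G.Walk a b}
    (hab : a ≠ b) (ha : a ∈ H)
    (hP : P.IsPath) (hPl : 2 ≤ P.length)
    (hPH : ∀ z ∈ P.support, z ∈ H → z = a ∨ z = b)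
    (hxH : x ∉ H) (hyH : y ∉ H) (hadj : G.Adj x y)
    (hx : x ∈ P.support) (hy : y ∈ P.support)
    (hlt : (P.takeUntil x hx).length + 1 + (P.dropUntil y hy).length < P.length) :
    ∃ P' : G.Walk a b, P'.IsPath ∧ 2 ≤ P'.length ∧
      (∀ z ∈ P'.support, z ∈ H → z = a ∨ z = b) ∧ P'.length < P.length := by
  set W : G.Walk a b := (P.takeUntil x hx).append (Walk.cons hadj (P.dropUntil y hy)) with hW
  have hWlen : W.length = (P.takeUntil x hx).length + 1 + (P.dropUntil y hy).length := by
    rw [hW, Walk.length_append, Walk.length_cons]; omega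
  have hsab : s(a, b) ∉ W.edges := by
    intro he
    rw [hW, Walk.edges_append, List.mem_append, Walk.edges_cons, List.mem_cons] at he
    rcases he with he | he | he
    · exact sab_not_mem hP hPl (P.edges_takeUntil_subset hx he)
    · rw [Sym2.eq_iff] at he
      rcases he with ⟨rfl, -⟩ | ⟨rfl, -⟩
      · exact hxH ha
      · exact hyH ha
    · exact sab_not_mem hP hPl (P.edges_dropUntil_subset hy he)
  obtain ⟨hp1, hp2, hp3⟩ := mkP W hab hsab
  refine ⟨W.bypass, hp1, hp2, ?_, by omega⟩
  intro z hz
  have hzW : z ∈ W.support := W.support_bypass_subset hz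
  have hzP : z ∈ P.support := by
    rw [hW, Walk.support_append, List.mem_append, Walk.support_cons, List.tail_cons] at hzW
    rcases hzW with h' | h'
    · exact P.support_takeUntil_subset hx h'
    · exact P.support_dropUntil_subset hy h'
  exact hPH z hzP

lemma step_in [DecidableEq V] {H : Set V} {b a x y : V} {Q : G.Walk b a}
    (hQH : ∀ z ∈ Q.support, z ∈ H) (hadj : G.Adj x y)
    (hx : x ∈ Q.support) (hy : y ∈ Q.support)
    (hlt : (Q.takeUntil x hx).length + 1 + (Q.dropUntil y hy).length < Q.length) :
    ∃ Q' : G.Walk b a, Q'.IsPath ∧ (∀ z ∈ Q'.support, z ∈ H) ∧ Q'.length < Q.length := by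
  set W : G.Walk b a := (Q.takeUntil x hx).append (Walk.cons hadj (Q.dropUntil y hy)) with hW
  have hWlen : W.length = (Q.takeUntil x hx).length + 1 + (Q.dropUntil y hy).length := by
    rw [hW, Walk.length_append, Walk.length_cons]; omega
  refine ⟨W.bypass, W.bypass_isPath, ?_, by have := W.length_bypass_le; omega⟩
  intro z hz
  have hzW : z ∈ W.support := W.support_bypass_subset hz
  rw [hW, Walk.support_append, List.mem_append, Walk.support_cons, List.tail_cons] at hzW
  rcases hzW with h' | h'
  · exact hQH z (Q.support_takeUntil_subset hx h')
  · exact hQH z (Q.support_dropUntil_subset hy h')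

lemma step_mixed [DecidableEq V] {H : Set V} {a b x y : V} {P : G.Walk a b} {Q : G.Walk b a}
    (ha : a ∈ H) (hb : b ∈ H) (hab : a ≠ b) (hP : P.IsPath) (hQ : Q.IsPath)
    (hPl : 2 ≤ P.length) (hPH : ∀ z ∈ P.support, z ∈ H → z = a ∨ z = b)
    (hQH : ∀ z ∈ Q.support, z ∈ H) (hadj : G.Adj x y) (hxH : x ∈ H) (hyH : y ∉ H)
    (hy : y ∈ P.support) (hxQ : x ∈ Q.support)
    (hchordP : s(x, y) ∉ P.edges) :
    ∃ m < P.length + Q.length, Conf G H m := by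
  have hya : y ≠ a := fun h => hyH (h ▸ ha)
  have hyb : y ≠ b := fun h => hyH (h ▸ hb)
  set T := P.takeUntil y hy with hT
  set D := P.dropUntil y hy with hD
  have hTD : T.length + D.length = P.length := length_takeUntil_add_dropUntil P hy
  have hT1 : 1 ≤ T.length := by
    rcases Nat.eq_zero_or_pos T.length with h0 | h0
    · exact absurd (Walk.eq_of_length_eq_zero h0) hya.symm.elim
    · exact h0
  have hD1 : 1 ≤ D.length := by
    rcases Nat.eq_zero_or_pos D.length with h0 | h0
    · exact absurd (Walk.eq_of_length_eq_zero h0) hyb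
    · exact h0
  by_cases hxa : x = a
  · subst hxa
    have hay : G.Adj x y := hadj
    set W : G.Walk x b := Walk.cons hay D with hW
    have hsab : s(x, b) ∉ W.edges := by
      intro he
      rw [hW, Walk.edges_cons, List.mem_cons] at he
      rcases he with he | he
      · rw [Sym2.eq_iff] at he
        rcases he with ⟨-, rfl⟩ | ⟨rfl, rfl⟩
        · exact hyH hb
        · exact hyH hxH
      · exact sab_not_mem hP hPl (P.edges_dropUntil_subset hy he)
    have hT2 : 2 ≤ T.length := by
      rcases Nat.lt_or_ge T.length 2 with h2 | h2
      · have h1 : T.length = 1 := by omega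
        exact absurd (P.edges_takeUntil_subset hy (edge_mem_of_length_one h1)) hchordP
      · exact h2
    obtain ⟨hp1, hp2, hp3⟩ := mkP W hab hsab
    have hWlen : W.length = D.length + 1 := by rw [hW, Walk.length_cons]
    refine ⟨W.bypass.length + Q.length, by omega, ?_⟩
    refine ⟨x, b, W.bypass, Q, ha, hb, hab, hp1, hQ, hp2, ?_, hQH, rfl⟩
    intro z hz
    have hzW : z ∈ W.support := W.support_bypass_subset hz
    rw [hW, Walk.support_cons] at hzW
    rcases List.mem_cons.mp hzW with rfl | hzD
    · exact fun _ => Or.inl rfl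
    · exact hPH z (P.support_dropUntil_subset hy hzD)
  · by_cases hxb : x = b
    · subst hxb
      have hyb' : G.Adj y x := hadj.symm
      set W : G.Walk a x := T.append (Walk.cons hyb' Walk.nil) with hW
      have hWlen : W.length = T.length + 1 := by
        rw [hW, Walk.length_append, Walk.length_cons, Walk.length_nil]
      have hsab : s(a, x) ∉ W.edges := by
        intro he
        rw [hW, Walk.edges_append, List.mem_append, Walk.edges_cons, List.mem_cons] at he
        rcases he with he | he | he
        · exact sab_not_mem hP hPl (P.edges_takeUntil_subset hy he)
        · rw [Sym2.eq_iff] at he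
          rcases he with ⟨rfl, -⟩ | ⟨rfl, -⟩
          · exact hyH ha
          · exact hab rfl
        · simp [Walk.edges_nil] at he
      have hD2 : 2 ≤ D.length := by
        rcases Nat.lt_or_ge D.length 2 with h2 | h2
        · have h1 : D.length = 1 := by omega
          have := P.edges_dropUntil_subset hy (edge_mem_of_length_one h1)
          rw [Sym2.eq_swap] at this
          exact absurd this hchordP
        · exact h2
      obtain ⟨hp1, hp2, hp3⟩ := mkP W hab hsab
      refine ⟨W.bypass.length + Q.length, by omega, ?_⟩
      refine ⟨a, x, W.bypass, Q, ha, hb, hab, hp1, hQ, hp2, ?_, hQH, rfl⟩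
      intro z hz
      have hzW : z ∈ W.support := W.support_bypass_subset hz
      rw [hW, Walk.support_append, List.mem_append, Walk.support_cons, List.tail_cons] at hzW
      rcases hzW with h' | h'
      · exact hPH z (P.support_takeUntil_subset hy h')
      · simp only [Walk.support_nil, List.mem_singleton] at h'
        exact fun _ => Or.inr h'
    · -- x ∉ {a, b}
      have hax : a ≠ x := fun h => hxa h.symm
      have hyx : G.Adj y x := hadj.symm
      set W : G.Walk a x := T.append (Walk.cons hyx Walk.nil) with hW
      have hWlen : W.length = T.length + 1 := by
        rw [hW, Walk.length_append, Walk.length_cons, Walk.length_nil]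
      have hbT : b ∉ T.support := by
        intro hbT
        have hPn := hP.support_nodup
        have hsplit : P.support = T.support ++ D.support.tail := by
          conv_lhs => rw [← P.take_spec hy]
          rw [Walk.support_append]
        rw [hsplit] at hPn
        have hdisj := List.disjoint_of_nodup_append hPn
        have hbD : b ∈ D.support.tail := by
          have hbD' : b ∈ D.support := Walk.end_mem_support D
          rw [Walk.support_eq_cons D] at hbD'
          rcases List.mem_cons.mp hbD' with rfl | h'
          · exact absurd rfl hyb.elim
          · exact h'
        exact hdisj hbT hbD
      have hsab : s(a, x) ∉ W.edges := by
        intro he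
        rw [hW, Walk.edges_append, List.mem_append, Walk.edges_cons, List.mem_cons] at he
        rcases he with he | he | he
        · have hxP : x ∈ P.support :=
            P.snd_mem_support_of_mem_edges (P.edges_takeUntil_subset hy he)
          rcases hPH x hxP hxH with rfl | rfl
          · exact hax rfl
          · exact hxb rfl
        · rw [Sym2.eq_iff] at he
          rcases he with ⟨rfl, -⟩ | ⟨rfl, -⟩
          · exact hyH ha
          · exact hxa rfl
        · simp [Walk.edges_nil] at he
      obtain ⟨hp1, hp2, hp3⟩ := mkP W hax hsab
      set DQ := Q.dropUntil x hxQ with hDQ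
      have hQlen : (Q.takeUntil x hxQ).length + DQ.length = Q.length :=
        length_takeUntil_add_dropUntil Q hxQ
      have hTQ1 : 1 ≤ (Q.takeUntil x hxQ).length := by
        rcases Nat.eq_zero_or_pos (Q.takeUntil x hxQ).length with h0 | h0
        · exact absurd (Walk.eq_of_length_eq_zero h0) (fun h => hxb h.symm)
        · exact h0
      refine ⟨W.bypass.length + DQ.bypass.length, by
        have := DQ.length_bypass_le; omega, ?_⟩
      refine ⟨a, x, W.bypass, DQ.bypass, ha, hxH, hax, hp1, DQ.bypass_isPath, hp2, ?_, ?_, rfl⟩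
      · intro z hz
        have hzW : z ∈ W.support := W.support_bypass_subset hz
        rw [hW, Walk.support_append, List.mem_append, Walk.support_cons, List.tail_cons] at hzW
        rcases hzW with h' | h'
        · intro hzH
          rcases hPH z (P.support_takeUntil_subset hy h') hzH with rfl | rfl
          · exact Or.inl rfl
          · exact absurd h' hbT
        · simp only [Walk.support_nil, List.mem_singleton] at h'
          exact fun _ => Or.inr h'
      · intro z hz
        exact hQH z (Q.support_dropUntil_subset hxQ (DQ.support_bypass_subset hz))

lemma conf_false [DecidableEq V] {H : Set V} (hconv : DeltaConvex G H)
    (hch : ChordalGraph G) : ∀ n, ¬ Conf G H n := by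
  intro n
  induction n using Nat.strong_induction_on with
  | _ n ih =>
  rintro ⟨a, b, P, Q, ha, hb, hab, hP, hQ, hPl, hPH, hQH, hn⟩
  have hQ1 : 1 ≤ Q.length := by
    rcases Nat.eq_zero_or_pos Q.length with h0 | h0
    · exact absurd (Walk.eq_of_length_eq_zero h0) (Ne.symm hab)
    · exact h0
  by_cases htri : P.length = 2 ∧ Q.length = 1
  · obtain ⟨hP2, hQ1'⟩ := htri
    have hba : G.Adj b a := Q.adj_of_mem_edges (edge_mem_of_length_one hQ1')
    cases P with
    | nil => simp at hP2
    | cons h₁ P₁ =>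
      cases P₁ with
      | nil => simp [Walk.length_cons] at hP2
      | cons h₂ P₂ =>
        cases P₂ with
        | cons h₃ P₃ => simp [Walk.length_cons] at hP2
        | nil =>
          rename_i w
          have hnd := hP.support_nodup
          simp only [Walk.support_cons, Walk.support_nil, List.nodup_cons, List.mem_cons,
            List.mem_singleton, List.not_mem_nil, or_false, not_or] at hnd
          have hwa : w ≠ a := fun h => hnd.1.1 h.symm
          have hwb : w ≠ b := hnd.2.1
          have hwH : w ∉ H := by
            intro hwH'
            rcases hPH w (by simp) hwH' with h | h
            · exact hwa h
            · exact hwb h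
          exact hwH (hconv ha hb hba.symm h₁.symm h₂)
  · have h4 : 4 ≤ P.length + Q.length := by
      rcases Nat.lt_or_ge (P.length + Q.length) 4 with h | h
      · exact absurd ⟨by omega, by omega⟩ htri
      · exact h
    have hcyc := conf_cycle hP hQ hPl hPH hQH
    have hClen : (P.append Q).length = P.length + Q.length := Walk.length_append P Q
    obtain ⟨x, y, hxC, hyC, hadj, hne⟩ := hch a (P.append Q) hcyc (by omega)
    have hxy : x ≠ y := hadj.ne
    have hmemC : ∀ z ∈ (P.append Q).support, z ∈ P.support ∨ z ∈ Q.support := by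
      intro z hz
      rw [Walk.support_append, List.mem_append] at hz
      rcases hz with h' | h'
      · exact Or.inl h'
      · refine Or.inr ?_
        rw [Walk.support_eq_cons Q]
        exact List.mem_cons_of_mem _ h'
    have hneP : s(x, y) ∉ P.edges := fun h' =>
      hne (by rw [Walk.edges_append, List.mem_append]; exact Or.inl h')
    have hneQ : s(x, y) ∉ Q.edges := fun h' =>
      hne (by rw [Walk.edges_append, List.mem_append]; exact Or.inr h')
    have hQmem : ∀ z, z ∈ (P.append Q).support → z ∈ H → z ∈ Q.support := by
      intro z hz hzH
      rcases hmemC z hz with h' | h'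
      · rcases hPH z h' hzH with rfl | rfl
        · exact Q.end_mem_support
        · exact Q.start_mem_support
      · exact h'
    by_cases hxH : x ∈ H <;> by_cases hyH : y ∈ H
    · -- both in H
      have hxQ : x ∈ Q.support := hQmem x hxC hxH
      have hyQ : y ∈ Q.support := hQmem y hyC hyH
      have hstep : ∃ Q' : G.Walk b a, Q'.IsPath ∧ (∀ z ∈ Q'.support, z ∈ H) ∧
          Q'.length < Q.length := by
        rcases ord Q hQ x y hxy hneQ hxQ hyQ with hor | hor
        · exact step_in hQH hadj hxQ hyQ hor
        · exact step_in hQH hadj.symm hyQ hxQ hor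
      obtain ⟨Q', hq1, hq2, hq3⟩ := hstep
      exact ih (P.length + Q'.length) (by omega)
        ⟨a, b, P, Q', ha, hb, hab, hP, hq1, hPl, hPH, hq2, rfl⟩
    · -- x ∈ H, y ∉ H
      have hyP : y ∈ P.support := by
        rcases hmemC y hyC with h' | h'
        · exact h'
        · exact absurd (hQH y h') hyH
      obtain ⟨m, hm, hc⟩ := step_mixed ha hb hab hP hQ hPl hPH hQH hadj hxH hyH hyP
        (hQmem x hxC hxH) hneP
      exact ih m (by omega) hc
    · -- y ∈ H, x ∉ H
      have hxP : x ∈ P.support := by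
        rcases hmemC x hxC with h' | h'
        · exact h'
        · exact absurd (hQH x h') hxH
      obtain ⟨m, hm, hc⟩ := step_mixed ha hb hab hP hQ hPl hPH hQH hadj.symm hyH hxH hxP
        (hQmem y hyC hyH) (by rwa [Sym2.eq_swap])
      exact ih m (by omega) hc
    · -- both out
      have hxP : x ∈ P.support := by
        rcases hmemC x hxC with h' | h'
        · exact h'
        · exact absurd (hQH x h') hxH
      have hyP : y ∈ P.support := by
        rcases hmemC y hyC with h' | h'
        · exact h'
        · exact absurd (hQH y h') hyH
      have hstep : ∃ P' : G.Walk a b, P'.IsPath ∧ 2 ≤ P'.length ∧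
          (∀ z ∈ P'.support, z ∈ H → z = a ∨ z = b) ∧ P'.length < P.length := by
        rcases ord P hP x y hxy hneP hxP hyP with hor | hor
        · exact step_out hab ha hP hPl hPH hxH hyH hadj hxP hyP hor
        · exact step_out hab ha hP hPl hPH hyH hxH hadj.symm hyP hxP hor
      obtain ⟨P', hp1, hp2, hp3, hp4⟩ := hstep
      exact ih (P'.length + Q.length) (by omega)
        ⟨a, b, P', Q, ha, hb, hab, hp1, hQ, hp2, hp3, hQH, rfl⟩

theorem stmt_0 {V : Type*} [Fintype V] (G : SimpleGraph V) (hconn : G.Connected)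
    (h2 : TwoConnected G) (hch : ChordalGraph G) :
    ∀ u v : V, G.Adj u v → deltaHull G {u, v} = Set.univ := by
  intro u v huv
  classical
  by_contra hne
  have hcv : DeltaConvex G (deltaHull G ({u, v} : Set V)) := deltaConvex_deltaHull _
  have hu : u ∈ deltaHull G {u, v} := subset_deltaHull _ (by simp)
  have hv : v ∈ deltaHull G {u, v} := subset_deltaHull _ (by simp)
  obtain ⟨z, hz⟩ : ∃ z, z ∉ deltaHull G ({u, v} : Set V) := by
    by_contra h
    push_neg at h
    exact hne (Set.eq_univ_of_forall h)
  obtain ⟨W0⟩ := hconn.preconnected z u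
  obtain ⟨a, W1, haH, hsub1, hcond1⟩ := first W0 hz hu
  have hza : z ≠ a := fun h => hz (h ▸ haH)
  obtain ⟨w, hwa, hwsup, hwa'⟩ := penult W1.bypass W1.bypass_isPath hza
  have hwH : w ∉ deltaHull G ({u, v} : Set V) :=
    hcond1 w (W1.support_bypass_subset hwsup) hwa'
  obtain ⟨hcard, hGconn, h2c⟩ := h2
  have htex : ∃ t : V, t ∈ deltaHull G ({u, v} : Set V) ∧ t ≠ a := by
    by_cases hau : a = u
    · exact ⟨v, hv, fun h => huv.ne' (h.trans hau)⟩
    · exact ⟨u, hu, fun h => hau h.symm⟩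
  obtain ⟨t, htH, hta⟩ := htex
  obtain ⟨W2⟩ := (h2c a).preconnected ⟨w, hwa'⟩ ⟨t, hta⟩
  let W3 : G.Walk w t := W2.map (SimpleGraph.Embedding.induce {x : V | x ≠ a}).toHom
  have hW3 : ∀ z' ∈ W3.support, z' ≠ a := by
    intro z' hz'
    replace hz' : z' ∈ W2.support.map (SimpleGraph.Embedding.induce (G := G) {x : V | x ≠ a}).toHom := by
      rw [← Walk.support_map]; exact hz'
    obtain ⟨⟨z'', hz''⟩, -, rfl⟩ := List.mem_map.mp hz'
    exact hz''
  obtain ⟨b, W4, hbH, hsub4, hcond4⟩ := first W3 hwH htH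
  have hba : b ≠ a := hW3 b (hsub4 b W4.end_mem_support)
  have hab : a ≠ b := fun h => hba h.symm
  set W5 : G.Walk a b := Walk.cons hwa.symm W4 with hW5
  have hsab5 : s(a, b) ∉ W5.edges := by
    intro he
    rw [hW5, Walk.edges_cons, List.mem_cons] at he
    rcases he with he | he
    · rw [Sym2.eq_iff] at he
      rcases he with ⟨-, rfl⟩ | ⟨rfl, rfl⟩
      · exact hwH hbH
      · exact hab rfl
    · exact hW3 a (hsub4 a (W4.fst_mem_support_of_mem_edges he)) rfl
  have hint5 : ∀ z' ∈ W5.support, z' ∈ deltaHull G ({u, v} : Set V) → z' = a ∨ z' = b := by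
    intro z' hz' hz'H
    rw [hW5, Walk.support_cons] at hz'
    rcases List.mem_cons.mp hz' with rfl | hz'
    · exact Or.inl rfl
    · by_cases hzb : z' = b
      · exact Or.inr hzb
      · exact absurd hz'H (hcond4 z' hz' hzb)
  obtain ⟨hp1, hp2, hp3⟩ := mkP W5 hab hsab5
  obtain ⟨Wb, hWb⟩ := hull_conn huv b hbH
  obtain ⟨Wa, hWa⟩ := hull_conn huv a haH
  set Q0 : G.Walk b a := Wb.append Wa.reverse with hQ0def
  have hQ0 : ∀ z' ∈ Q0.support, z' ∈ deltaHull G ({u, v} : Set V) := by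
    intro z' hz'
    rw [hQ0def, Walk.support_append, List.mem_append] at hz'
    rcases hz' with h' | h'
    · exact hWb z' h'
    · have : z' ∈ Wa.reverse.support := by
        rw [Walk.support_eq_cons Wa.reverse]
        exact List.mem_cons_of_mem _ h'
      rw [Walk.support_reverse, List.mem_reverse] at this
      exact hWa z' this
  exact conf_false hcv hch (W5.bypass.length + Q0.bypass.length)
    ⟨a, b, W5.bypass, Q0.bypass, haH, hbH, hab, hp1, Q0.bypass_isPath, hp2,
      fun z' hz' => hint5 z' (W5.support_bypass_subset hz'),
      fun z' hz' => hQ0 z' (Q0.support_bypass_subset hz'), rfl⟩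

end Aux
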